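/- Let U be an ultrafilter on a set I, *ℝ = Germ U ℝ, *ℂ = Germ U ℂ with the absolute value |·| : *ℂ → *ℝ induced pointwise, and let ρ ∈ *ℝ be a positive infinitesimal (0 < ρ and ρ < 1/n for all n ∈ ℕ). Then the ρ-moderate numbers M_ρ(*ℂ) form a subring of *ℂ, the ρ-negligible numbers N_ρ(*ℂ) form an ideal of M_ρ(*ℂ), and the quotient ^ρℂ = M_ρ(*ℂ)/N_ρ(*ℂ) is an algebraically closed field: every polynomial over ^ρℂ of degree ≥ 1 has a root in ^ρℂ. Likewise ^ρℝ = M_ρ(*ℝ)/N_ρ(*ℝ) is a field in which every element is either a square or the negative of a square (a real closed field), and ^ρℂ = ^ρℝ(i). -/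

import Mathlib

open Filter

section RobAux
open Filter.Germ

variable {I : Type*} {U : Ultrafilter I}

local notation "GA" => Filter.Germ.map (fun z : ℂ => ‖z‖)

theorem rf_GA_nonneg (ζ : Filter.Germ (U : Filter I) ℂ) : 0 ≤ GA ζ :=
  Germ.inductionOn ζ fun f => by
    rw [map_coe, ← Germ.coe_zero]
    exact Germ.coe_le.mpr (Eventually.of_forall fun i => norm_nonneg _)

theorem rf_GA_one : GA (1 : Filter.Germ (U : Filter I) ℂ) = 1 := by
  rw [← Germ.coe_one, map_coe]
  exact Germ.coe_eq.mpr (Eventually.of_forall fun i => by simp [Function.comp])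

theorem rf_GA_zero : GA (0 : Filter.Germ (U : Filter I) ℂ) = 0 := by
  rw [← Germ.coe_zero, map_coe]
  exact Germ.coe_eq.mpr (Eventually.of_forall fun i => by simp [Function.comp])

theorem rf_GA_mul (ζ ξ : Filter.Germ (U : Filter I) ℂ) : GA (ζ * ξ) = GA ζ * GA ξ :=
  Germ.inductionOn₂ ζ ξ fun f g => by
    rw [← Germ.coe_mul, map_coe, map_coe, map_coe, ← Germ.coe_mul]
    exact Germ.coe_eq.mpr (Eventually.of_forall fun i => by simp [Function.comp])

theorem rf_GA_neg (ζ : Filter.Germ (U : Filter I) ℂ) : GA (-ζ) = GA ζ :=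
  Germ.inductionOn ζ fun f => by
    rw [← Germ.coe_neg, map_coe, map_coe]
    exact Germ.coe_eq.mpr (Eventually.of_forall fun i => by simp [Function.comp])

theorem rf_GA_add_le (ζ ξ : Filter.Germ (U : Filter I) ℂ) : GA (ζ + ξ) ≤ GA ζ + GA ξ :=
  Germ.inductionOn₂ ζ ξ fun f g => by
    rw [← Germ.coe_add, map_coe, map_coe, map_coe, ← Germ.coe_add]
    exact Germ.coe_le.mpr (Eventually.of_forall fun i => norm_add_le _ _)

theorem rf_GA_pow (ζ : Filter.Germ (U : Filter I) ℂ) (k : ℕ) : GA (ζ ^ k) = GA ζ ^ k := by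
  induction k with
  | zero => simpa using rf_GA_one
  | succ k ih => rw [pow_succ, pow_succ, rf_GA_mul, ih]

theorem rf_GA_eq_zero {ζ : Filter.Germ (U : Filter I) ℂ} (h : GA ζ = 0) : ζ = 0 :=
  Germ.inductionOn ζ (fun f h => by
    rw [map_coe, ← Germ.coe_zero, Germ.coe_eq] at h
    rw [← Germ.coe_zero, Germ.coe_eq]
    exact h.mono fun i hi => by simpa using hi) h

theorem rf_GA_sum_le (s : Finset ℕ) (x : ℕ → Filter.Germ (U : Filter I) ℂ) :
    GA (∑ k ∈ s, x k) ≤ ∑ k ∈ s, GA (x k) := by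
  classical
  induction s using Finset.induction with
  | empty => simp [rf_GA_zero]
  | insert _ _ hk ih =>
    rw [Finset.sum_insert hk, Finset.sum_insert hk]
    exact (rf_GA_add_le _ _).trans (by gcongr)

theorem rf_exists_rep {β : Type*} (x : Filter.Germ (U : Filter I) β) :
    ∃ f : I → β, x = ↑f :=
  Germ.inductionOn x fun f => ⟨f, rfl⟩

end RobAux

section RhoAux
variable {K : Type*} [Field K] [LinearOrder K] [IsStrictOrderedRing K] {ρ : K}

theorem rf_anti (hρ : 0 < ρ) (hρ1 : ρ ≤ 1) {a b : ℤ} (h : a ≤ b) : ρ ^ b ≤ ρ ^ a :=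
  zpow_le_zpow_right_of_le_one₀ hρ hρ1 h

theorem rf_one_le (hρ : 0 < ρ) (hρ1 : ρ ≤ 1) (m : ℕ) : (1 : K) ≤ ρ ^ (-(m : ℤ)) := by
  have := rf_anti hρ hρ1 (by exact_mod_cast neg_nonpos.mpr (Int.ofNat_nonneg m) : -(m:ℤ) ≤ 0)
  simpa using this

theorem rf_zpow_mul (hρ : 0 < ρ) (m n : ℕ) :
    ρ ^ (-(m : ℤ)) * ρ ^ (-(n : ℤ)) = ρ ^ (-((m + n : ℕ) : ℤ)) := by
  rw [← zpow_add₀ hρ.ne']; push_cast; ring_nf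

theorem rf_cancel (hρ : 0 < ρ) (m n : ℕ) :
    ρ ^ (-(m : ℤ)) * ρ ^ (n + m) = ρ ^ n := by
  rw [← zpow_natCast ρ (n + m), ← zpow_natCast ρ n, ← zpow_add₀ hρ.ne']
  congr 1; push_cast; ring

theorem rf_inv_cancel (hρ : 0 < ρ) (n : ℕ) :
    ρ ^ (-(n : ℤ)) * ρ ^ n = 1 := by
  rw [← zpow_natCast ρ n, ← zpow_add₀ hρ.ne', neg_add_cancel, zpow_zero]

theorem rf_uniform (hρ : 0 < ρ) (hρ1 : ρ ≤ 1) (g : ℕ → K) :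
    ∀ p : ℕ, (∀ k ≤ p, ∃ m : ℕ, g k ≤ ρ ^ (-(m : ℤ))) →
      ∃ m : ℕ, ∀ k ≤ p, g k ≤ ρ ^ (-(m : ℤ)) := by
  intro p
  induction p with
  | zero =>
    intro h
    obtain ⟨m, hm⟩ := h 0 le_rfl
    exact ⟨m, fun k hk => by rw [Nat.le_zero.mp hk]; exact hm⟩
  | succ p ih =>
    intro h
    obtain ⟨m1, h1⟩ := ih fun k hk => h k (hk.trans (Nat.le_succ p))
    obtain ⟨m2, h2⟩ := h (p + 1) le_rfl
    refine ⟨max m1 m2, fun k hk => ?_⟩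
    rcases Nat.lt_succ_iff_lt_or_eq.mp (Nat.lt_succ_of_le hk) with hk' | hk'
    · exact (h1 k (Nat.lt_succ_iff.mp hk')).trans
        (rf_anti hρ hρ1 (neg_le_neg (by exact_mod_cast le_max_left m1 m2)))
    · subst hk'
      exact h2.trans (rf_anti hρ hρ1 (neg_le_neg (by exact_mod_cast le_max_right m1 m2)))

end RhoAux

theorem rf_exists_root (p : ℕ) (hp : 1 ≤ p) (c : ℕ → ℂ) (hc : c p ≠ 0) :
    ∃ z : ℂ, ∑ k ∈ Finset.range (p + 1), c k * z ^ k = 0 := by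
  classical
  set P : Polynomial ℂ := ∑ k ∈ Finset.range (p + 1), Polynomial.C (c k) * Polynomial.X ^ k with hP
  have hcoeff : P.coeff p = c p := by
    rw [hP, Polynomial.finset_sum_coeff]
    rw [Finset.sum_eq_single p]
    · simp
    · intro b _ hb; simp [Polynomial.coeff_C_mul, Polynomial.coeff_X_pow, hb, Ne.symm hb]
    · intro h; exact absurd (Finset.self_mem_range_succ p) h
  have hdeg : 0 < P.degree := by
    have h1 : (p : WithBot ℕ) ≤ P.degree := Polynomial.le_degree_of_ne_zero (hcoeff ▸ hc)
    exact lt_of_lt_of_le (by exact_mod_cast hp) h1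
  obtain ⟨z, hz⟩ := Complex.exists_root hdeg
  refine ⟨z, ?_⟩
  have := hz
  rw [Polynomial.IsRoot, hP, Polynomial.eval_finset_sum] at this
  simpa using this

/-- `ζ ∈ *ℂ` is `ρ`-moderate: `|ζ| ≤ ρ^{−m}` for some `m ∈ ℕ` (in `*ℝ`). -/
def ModerateGC {I : Type*} (U : Ultrafilter I) (ρ : Filter.Germ (U : Filter I) ℝ)
    (ζ : Filter.Germ (U : Filter I) ℂ) : Prop :=
  ∃ m : ℕ, Filter.Germ.map (fun z : ℂ => ‖z‖) ζ ≤ ρ ^ (-(m : ℤ))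

/-- `ζ ∈ *ℂ` is `ρ`-negligible: `|ζ| < ρ^n` for every `n ∈ ℕ`. -/
def NegligibleGC {I : Type*} (U : Ultrafilter I) (ρ : Filter.Germ (U : Filter I) ℝ)
    (ζ : Filter.Germ (U : Filter I) ℂ) : Prop :=
  ∀ n : ℕ, Filter.Germ.map (fun z : ℂ => ‖z‖) ζ < ρ ^ n

/-- `ξ ∈ *ℝ` is `ρ`-moderate. -/
def ModerateGR {I : Type*} (U : Ultrafilter I) (ρ : Filter.Germ (U : Filter I) ℝ)
    (ξ : Filter.Germ (U : Filter I) ℝ) : Prop :=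
  ∃ m : ℕ, |ξ| ≤ ρ ^ (-(m : ℤ))

/-- `ξ ∈ *ℝ` is `ρ`-negligible. -/
def NegligibleGR {I : Type*} (U : Ultrafilter I) (ρ : Filter.Germ (U : Filter I) ℝ)
    (ξ : Filter.Germ (U : Filter I) ℝ) : Prop :=
  ∀ n : ℕ, |ξ| < ρ ^ n

section Main
open Filter.Germ
local notation "GA" => Filter.Germ.map (fun z : ℂ => ‖z‖)

set_option maxHeartbeats 2000000 in
/-- for a positive infinitesimal `ρ ∈ *ℝ`, the `ρ`-moderate numbers form a
subring of `*ℂ`, the `ρ`-negligible numbers an ideal thereof, and the quotient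
`^ρℂ = M_ρ(*ℂ)/N_ρ(*ℂ)` is an algebraically closed field; likewise `^ρℝ` is a field in
which every element is a square or the negative of a square (a real closed field) and
`^ρℂ = ^ρℝ(i)` — all stated elementwise on representatives. -/
theorem robinson_field_algebraically_closed {I : Type*} (U : Ultrafilter I)
    (ρ : Filter.Germ (U : Filter I) ℝ) (hρ : 0 < ρ)
    (hρinf : ∀ n : ℕ, 1 ≤ n → ρ < ((n : Filter.Germ (U : Filter I) ℝ))⁻¹) :
    -- M_ρ(*ℂ) is a subring of *ℂ
    (ModerateGC U ρ 1 ∧ ModerateGC U ρ 0 ∧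
      ∀ ζ ξ, ModerateGC U ρ ζ → ModerateGC U ρ ξ →
        ModerateGC U ρ (ζ + ξ) ∧ ModerateGC U ρ (ζ * ξ) ∧ ModerateGC U ρ (-ζ)) ∧
    -- N_ρ(*ℂ) is an ideal of M_ρ(*ℂ)
    ((∀ ζ, NegligibleGC U ρ ζ → ModerateGC U ρ ζ) ∧ NegligibleGC U ρ 0 ∧
      (∀ ζ ξ, NegligibleGC U ρ ζ → NegligibleGC U ρ ξ → NegligibleGC U ρ (ζ + ξ)) ∧
      (∀ ζ, NegligibleGC U ρ ζ → NegligibleGC U ρ (-ζ)) ∧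
      (∀ ζ ξ, ModerateGC U ρ ζ → NegligibleGC U ρ ξ → NegligibleGC U ρ (ζ * ξ))) ∧
    -- the quotient ^ρℂ is a field
    (∀ ζ, ModerateGC U ρ ζ → ¬ NegligibleGC U ρ ζ →
      ∃ ξ, ModerateGC U ρ ξ ∧ NegligibleGC U ρ (ζ * ξ - 1)) ∧
    -- ^ρℂ is algebraically closed
    (∀ p : ℕ, 1 ≤ p → ∀ a : ℕ → Filter.Germ (U : Filter I) ℂ,
      (∀ k ≤ p, ModerateGC U ρ (a k)) → ¬ NegligibleGC U ρ (a p) →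
      ∃ ζ, ModerateGC U ρ ζ ∧
        NegligibleGC U ρ (∑ k ∈ Finset.range (p + 1), a k * ζ ^ k)) ∧
    -- ^ρℝ is a field ...
    (∀ ξ, ModerateGR U ρ ξ → ¬ NegligibleGR U ρ ξ →
      ∃ η, ModerateGR U ρ η ∧ NegligibleGR U ρ (ξ * η - 1)) ∧
    -- ... in which every element is a square or the negative of a square
    (∀ ξ, ModerateGR U ρ ξ → ∃ η, ModerateGR U ρ η ∧
      (NegligibleGR U ρ (ξ - η ^ 2) ∨ NegligibleGR U ρ (ξ + η ^ 2))) ∧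
    -- ^ρℂ = ^ρℝ(i)
    (∀ ζ, ModerateGC U ρ ζ → ∃ a b, ModerateGR U ρ a ∧ ModerateGR U ρ b ∧
      NegligibleGC U ρ (ζ - (Filter.Germ.map (fun t : ℝ => (t : ℂ)) a +
        (↑(Complex.I) : Filter.Germ (U : Filter I) ℂ) *
          Filter.Germ.map (fun t : ℝ => (t : ℂ)) b))) := by
  classical
  have hρ1 : ρ < 1 := by simpa using hρinf 1 le_rfl
  have hρle1 : ρ ≤ 1 := hρ1.le
  have hzpos : ∀ z : ℤ, 0 < ρ ^ z := fun z => zpow_pos hρ z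
  have hnpos : ∀ n : ℕ, 0 < ρ ^ n := fun n => pow_pos hρ n
  have hinv : ∀ n : ℕ, 1 ≤ n → (n : Filter.Germ (U : Filter I) ℝ) < ρ ^ (-1 : ℤ) := by
    intro n hn
    have h1 : (0 : Filter.Germ (U : Filter I) ℝ) < (n : _) := by
      exact_mod_cast Nat.cast_pos.mpr hn
    have h2 : (n : Filter.Germ (U : Filter I) ℝ) * ρ < 1 := by
      have := mul_lt_mul_of_pos_left (hρinf n hn) h1
      rwa [mul_inv_cancel₀ h1.ne'] at this
    have h3 := mul_lt_mul_of_pos_right h2 (inv_pos.mpr hρ)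
    rwa [mul_assoc, mul_inv_cancel₀ hρ.ne', mul_one, one_mul, ← zpow_neg_one] at h3
  have key2 : ∀ m : ℕ, (2 : Filter.Germ (U : Filter I) ℝ) * ρ ^ (-(m : ℤ)) ≤ ρ ^ (-((m + 1 : ℕ) : ℤ)) := by
    intro m
    have h2 : (2 : Filter.Germ (U : Filter I) ℝ) ≤ ρ ^ (-1 : ℤ) := by
      have := (hinv 2 (by norm_num)).le; exact_mod_cast this
    calc (2 : Filter.Germ (U : Filter I) ℝ) * ρ ^ (-(m : ℤ))
        ≤ ρ ^ (-1 : ℤ) * ρ ^ (-(m : ℤ)) :=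
          mul_le_mul_of_nonneg_right h2 (hzpos _).le
      _ = ρ ^ (-((m + 1 : ℕ) : ℤ)) := by
          rw [show (-1 : ℤ) = -((1 : ℕ) : ℤ) by norm_num, rf_zpow_mul hρ 1 m]
          congr 1; push_cast; ring
  have key3 : ∀ n : ℕ, ρ ^ (n + 1) + ρ ^ (n + 1) ≤ ρ ^ n := by
    intro n
    have h2 : (2 : Filter.Germ (U : Filter I) ℝ) * ρ ≤ 1 := by
      have h1 : (0 : Filter.Germ (U : Filter I) ℝ) < ((2:ℕ) : _) := by norm_num
      have := mul_lt_mul_of_pos_left (hρinf 2 (by norm_num)) h1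
      rw [mul_inv_cancel₀ h1.ne'] at this
      exact_mod_cast this.le
    calc ρ ^ (n + 1) + ρ ^ (n + 1) = (2 * ρ) * ρ ^ n := by ring
      _ ≤ 1 * ρ ^ n := mul_le_mul_of_nonneg_right h2 (hnpos n).le
      _ = ρ ^ n := one_mul _
  have hmonoC : ∀ (x : Filter.Germ (U : Filter I) ℝ) (m m' : ℕ), m ≤ m' →
      x ≤ ρ ^ (-(m : ℤ)) → x ≤ ρ ^ (-(m' : ℤ)) := fun x m m' hmm h =>
    h.trans (rf_anti hρ hρle1 (neg_le_neg (by exact_mod_cast hmm)))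
  have hneg0C : NegligibleGC U ρ 0 := fun n => by rw [rf_GA_zero]; exact hnpos n
  have hneg0R : NegligibleGR U ρ 0 := fun n => by rw [abs_zero]; exact hnpos n
  refine ⟨⟨?_, ?_, ?_⟩, ⟨?_, hneg0C, ?_, ?_, ?_⟩, ?_, ?_, ?_, ?_, ?_⟩
  · -- 1 moderate
    exact ⟨0, by rw [rf_GA_one]; exact rf_one_le hρ hρle1 0⟩
  · -- 0 moderate
    exact ⟨0, by rw [rf_GA_zero]; exact zero_le_one.trans (rf_one_le hρ hρle1 0)⟩
  · -- closure under +, *, -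
    rintro ζ ξ ⟨m1, h1⟩ ⟨m2, h2⟩
    refine ⟨⟨max m1 m2 + 1, ?_⟩, ⟨m1 + m2, ?_⟩, ⟨m1, by rwa [rf_GA_neg]⟩⟩
    · calc Filter.Germ.map (fun z : ℂ => ‖z‖) (ζ + ξ)
          ≤ _ + _ := rf_GA_add_le ζ ξ
        _ ≤ ρ ^ (-((max m1 m2 : ℕ) : ℤ)) + ρ ^ (-((max m1 m2 : ℕ) : ℤ)) :=
            add_le_add (hmonoC _ m1 _ (le_max_left _ _) h1) (hmonoC _ m2 _ (le_max_right _ _) h2)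
        _ = 2 * ρ ^ (-((max m1 m2 : ℕ) : ℤ)) := by ring
        _ ≤ ρ ^ (-((max m1 m2 + 1 : ℕ) : ℤ)) := key2 _
    · rw [rf_GA_mul]
      exact (mul_le_mul h1 h2 (rf_GA_nonneg _) (hzpos _).le).trans_eq (rf_zpow_mul hρ m1 m2)
  · -- negligible → moderate
    intro ζ h
    exact ⟨0, by simpa using (h 0).le⟩
  · -- sum of negligibles
    intro ζ ξ hζ hξ n
    exact (rf_GA_add_le ζ ξ).trans_lt
      (lt_of_lt_of_le (add_lt_add (hζ (n + 1)) (hξ (n + 1))) (key3 n))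
  · -- neg of negligible
    intro ζ h n
    rw [rf_GA_neg]; exact h n
  · -- moderate * negligible
    rintro ζ ξ ⟨m, hm⟩ hξ n
    rw [rf_GA_mul]
    calc Filter.Germ.map (fun z : ℂ => ‖z‖) ζ * Filter.Germ.map (fun z : ℂ => ‖z‖) ξ
        ≤ ρ ^ (-(m : ℤ)) * Filter.Germ.map (fun z : ℂ => ‖z‖) ξ :=
          mul_le_mul_of_nonneg_right hm (rf_GA_nonneg _)
      _ < ρ ^ (-(m : ℤ)) * ρ ^ (n + m) := mul_lt_mul_of_pos_left (hξ (n + m)) (hzpos _)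
      _ = ρ ^ n := rf_cancel hρ m n
  · -- ^ρℂ is a field
    rintro ζ ⟨m, hm⟩ hneg
    rw [NegligibleGC] at hneg; push_neg at hneg
    obtain ⟨n, hn⟩ := hneg
    have hζ0 : ζ ≠ 0 := by
      intro h; rw [h, rf_GA_zero] at hn; exact absurd hn (not_le.mpr (hnpos n))
    have hGAinv : Filter.Germ.map (fun z : ℂ => ‖z‖) ζ *
        Filter.Germ.map (fun z : ℂ => ‖z‖) ζ⁻¹ = 1 := by
      rw [← rf_GA_mul, mul_inv_cancel₀ hζ0, rf_GA_one]
    refine ⟨ζ⁻¹, ⟨n, ?_⟩, ?_⟩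
    · have hpos : (0 : Filter.Germ (U : Filter I) ℝ) < Filter.Germ.map (fun z : ℂ => ‖z‖) ζ :=
        lt_of_lt_of_le (hnpos n) hn
      have h1 := mul_le_mul_of_nonneg_right hn (rf_GA_nonneg ζ⁻¹)
      rw [hGAinv] at h1
      -- ρ^n * GA ζ⁻¹ ≤ 1 → GA ζ⁻¹ ≤ ρ^{-n}
      have h2 := mul_le_mul_of_nonneg_left h1 (hzpos (-(n : ℤ))).le
      rwa [mul_one, ← mul_assoc, rf_inv_cancel hρ n, one_mul] at h2
    · rw [mul_inv_cancel₀ hζ0, sub_self]; exact hneg0C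
  · -- ^ρℂ algebraically closed
    intro p hp a hmodall hlead
    obtain ⟨m, hm⟩ := rf_uniform hρ hρle1 (fun k => GA (a k)) p hmodall
    rw [NegligibleGC] at hlead; push_neg at hlead
    obtain ⟨n, hn⟩ := hlead
    have hap0 : a p ≠ 0 := fun h => by
      rw [h, rf_GA_zero] at hn; exact absurd hn (not_le.mpr (hnpos n))
    choose f hf using fun k => rf_exists_rep (a k)
    have hS : ∀ᶠ i in (U : Filter I), f p i ≠ 0 := by
      rw [Ultrafilter.eventually_not]
      intro hcon
      exact hap0 (by rw [hf p, ← Germ.coe_zero]; exact Germ.coe_eq.mpr hcon)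
    have hgex : ∀ i, ∃ z : ℂ, f p i ≠ 0 → ∑ k ∈ Finset.range (p + 1), f k i * z ^ k = 0 := by
      intro i
      by_cases hi : f p i = 0
      · exact ⟨0, fun hh => absurd hi hh⟩
      · obtain ⟨z, hz⟩ := rf_exists_root p hp (fun k => f k i) hi
        exact ⟨z, fun _ => hz⟩
    choose g hg using hgex
    have hc : ∀ k, a k * (↑g : Filter.Germ (U : Filter I) ℂ) ^ k =
        ↑(fun i => f k i * g i ^ k) := by
      intro k; rw [hf k, ← Germ.coe_pow, ← Germ.coe_mul]; rfl
    have Hsum : ∑ k ∈ Finset.range (p + 1), a k * (↑g : Filter.Germ (U : Filter I) ℂ) ^ k = 0 := by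
      simp only [hc]
      have hmap := map_sum (Filter.Germ.coeRingHom (U : Filter I) (R := ℂ))
        (fun k => (fun i => f k i * g i ^ k)) (Finset.range (p + 1))
      have hcoe : ∀ q : I → ℂ, Filter.Germ.coeRingHom (U : Filter I) q = (↑q : Filter.Germ (U : Filter I) ℂ) := fun q => rfl
      simp only [hcoe] at hmap
      rw [← hmap, ← Germ.coe_zero]
      refine Germ.coe_eq.mpr (hS.mono fun i hi => ?_)
      simpa [Finset.sum_apply] using hg i hi
    refine ⟨↑g, ?_, by rw [Hsum]; exact hneg0C⟩
    rcases le_total (GA (↑g : Filter.Germ (U : Filter I) ℂ)) 1 with h1 | h1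
    · exact ⟨0, by simpa using h1⟩
    · set t := GA (↑g : Filter.Germ (U : Filter I) ℂ) with ht
      have h0t : (0 : Filter.Germ (U : Filter I) ℝ) < t := lt_of_lt_of_le one_pos h1
      have hps : p - 1 + 1 = p := Nat.succ_pred_eq_of_pos hp
      have hEq : a p * (↑g : Filter.Germ (U : Filter I) ℂ) ^ p =
          -∑ k ∈ Finset.range p, a k * (↑g : Filter.Germ (U : Filter I) ℂ) ^ k := by
        rw [Finset.sum_range_succ] at Hsum
        exact eq_neg_of_add_eq_zero_right Hsum
      have hstep1 : GA (a p) * t ^ p ≤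
          (p : Filter.Germ (U : Filter I) ℝ) * (ρ ^ (-(m : ℤ)) * t ^ (p - 1)) := by
        have h0 := congrArg GA hEq
        rw [rf_GA_mul, rf_GA_pow, rf_GA_neg] at h0
        calc GA (a p) * t ^ p = GA (∑ k ∈ Finset.range p, a k * (↑g : Filter.Germ (U : Filter I) ℂ) ^ k) := h0
          _ ≤ ∑ k ∈ Finset.range p, GA (a k * (↑g : Filter.Germ (U : Filter I) ℂ) ^ k) := rf_GA_sum_le _ _
          _ ≤ ∑ _k ∈ Finset.range p, ρ ^ (-(m : ℤ)) * t ^ (p - 1) := by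
              refine Finset.sum_le_sum fun k hk => ?_
              rw [rf_GA_mul, rf_GA_pow]
              exact mul_le_mul (hm k (Nat.le_of_lt (Finset.mem_range.mp hk)))
                (pow_le_pow_right₀ h1 (Nat.le_pred_of_lt (Finset.mem_range.mp hk)))
                (pow_nonneg h0t.le k) (hzpos _).le
          _ = (p : Filter.Germ (U : Filter I) ℝ) * (ρ ^ (-(m : ℤ)) * t ^ (p - 1)) := by
              rw [Finset.sum_const, Finset.card_range, nsmul_eq_mul]
      have hstep2 : ρ ^ n * t ≤ (p : Filter.Germ (U : Filter I) ℝ) * ρ ^ (-(m : ℤ)) := by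
        have hpow : t ^ p = t ^ (p - 1) * t := by conv_lhs => rw [← hps, pow_succ]
        have hA := mul_le_mul_of_nonneg_right hn (pow_nonneg h0t.le p)
        have hB := hA.trans hstep1
        have hC : (ρ ^ n * t) * t ^ (p - 1) ≤
            ((p : Filter.Germ (U : Filter I) ℝ) * ρ ^ (-(m : ℤ))) * t ^ (p - 1) := by
          calc (ρ ^ n * t) * t ^ (p - 1) = ρ ^ n * t ^ p := by rw [hpow]; ring
            _ ≤ (p : Filter.Germ (U : Filter I) ℝ) * (ρ ^ (-(m : ℤ)) * t ^ (p - 1)) := hB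
            _ = ((p : Filter.Germ (U : Filter I) ℝ) * ρ ^ (-(m : ℤ))) * t ^ (p - 1) := by ring
        exact le_of_mul_le_mul_right hC (pow_pos h0t (p - 1))
      have hstep3 : ρ ^ n * t ≤ ρ ^ (-((1 + m : ℕ) : ℤ)) := by
        refine hstep2.trans ?_
        calc (p : Filter.Germ (U : Filter I) ℝ) * ρ ^ (-(m : ℤ))
            ≤ ρ ^ (-1 : ℤ) * ρ ^ (-(m : ℤ)) :=
              mul_le_mul_of_nonneg_right (hinv p hp).le (hzpos _).le
          _ = ρ ^ (-((1 + m : ℕ) : ℤ)) := by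
              rw [show (-1 : ℤ) = -((1 : ℕ) : ℤ) by norm_num, rf_zpow_mul hρ 1 m]
      refine ⟨n + (1 + m), ?_⟩
      have h4 := mul_le_mul_of_nonneg_left hstep3 (hzpos (-(n : ℤ))).le
      rw [← mul_assoc, rf_inv_cancel hρ n, one_mul, rf_zpow_mul hρ n (1 + m)] at h4
      exact h4
  · -- ^ρℝ is a field
    rintro ξ ⟨m, hm⟩ hneg
    rw [NegligibleGR] at hneg; push_neg at hneg
    obtain ⟨n, hn⟩ := hneg
    have hξ0 : ξ ≠ 0 := by
      intro h; rw [h, abs_zero] at hn; exact absurd hn (not_le.mpr (hnpos n))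
    refine ⟨ξ⁻¹, ⟨n, ?_⟩, ?_⟩
    · have h1 := mul_le_mul_of_nonneg_right hn (abs_nonneg ξ⁻¹)
      rw [← abs_mul, mul_inv_cancel₀ hξ0, abs_one] at h1
      have h2 := mul_le_mul_of_nonneg_left h1 (hzpos (-(n : ℤ))).le
      rwa [mul_one, ← mul_assoc, rf_inv_cancel hρ n, one_mul] at h2
    · rw [mul_inv_cancel₀ hξ0, sub_self]; exact hneg0R
  · -- squares in ^ρℝ
    rintro ξ ⟨m, hm⟩
    obtain ⟨f, rfl⟩ := rf_exists_rep ξ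
    have h1m : (1 : Filter.Germ (U : Filter I) ℝ) ≤ ρ ^ (-(m : ℤ)) := rf_one_le hρ hρle1 m
    rcases le_total (0 : Filter.Germ (U : Filter I) ℝ) ↑f with hsgn | hsgn
    · have hev : ∀ᶠ i in (U : Filter I), 0 ≤ f i := by
        rw [← Germ.coe_zero] at hsgn
        exact Germ.coe_le.mp hsgn
      have hsq : (↑(fun i => Real.sqrt (f i)) : Filter.Germ (U : Filter I) ℝ) ^ 2 = ↑f := by
        rw [← Germ.coe_pow]
        exact Germ.coe_eq.mpr (hev.mono fun i hi => by simpa using Real.sq_sqrt hi)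
      refine ⟨↑(fun i => Real.sqrt (f i)), ⟨m, ?_⟩, Or.inl (by rw [hsq, sub_self]; exact hneg0R)⟩
      have habs2 : |(↑(fun i => Real.sqrt (f i)) : Filter.Germ (U : Filter I) ℝ)| ^ 2 ≤ (ρ ^ (-(m : ℤ))) ^ 2 := by
        rw [sq_abs, hsq]
        calc (↑f : Filter.Germ (U : Filter I) ℝ) = |↑f| := (abs_of_nonneg hsgn).symm
          _ ≤ ρ ^ (-(m : ℤ)) := hm
          _ ≤ (ρ ^ (-(m : ℤ))) ^ 2 := le_self_pow₀ h1m two_ne_zero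
      exact le_of_pow_le_pow_left₀ two_ne_zero (hzpos _).le habs2
    · have hev : ∀ᶠ i in (U : Filter I), f i ≤ 0 := by
        rw [← Germ.coe_zero] at hsgn
        exact Germ.coe_le.mp hsgn
      have hsq : (↑(fun i => Real.sqrt (-f i)) : Filter.Germ (U : Filter I) ℝ) ^ 2 = -↑f := by
        rw [← Germ.coe_pow, ← Germ.coe_neg]
        exact Germ.coe_eq.mpr (hev.mono fun i hi => by
          simpa using Real.sq_sqrt (neg_nonneg.mpr hi))
      refine ⟨↑(fun i => Real.sqrt (-f i)), ⟨m, ?_⟩, Or.inr (by rw [hsq, add_neg_cancel]; exact hneg0R)⟩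
      have habs2 : |(↑(fun i => Real.sqrt (-f i)) : Filter.Germ (U : Filter I) ℝ)| ^ 2 ≤ (ρ ^ (-(m : ℤ))) ^ 2 := by
        rw [sq_abs, hsq]
        calc -(↑f : Filter.Germ (U : Filter I) ℝ) = |↑f| := (abs_of_nonpos hsgn).symm
          _ ≤ ρ ^ (-(m : ℤ)) := hm
          _ ≤ (ρ ^ (-(m : ℤ))) ^ 2 := le_self_pow₀ h1m two_ne_zero
      exact le_of_pow_le_pow_left₀ two_ne_zero (hzpos _).le habs2
  · -- ^ρℂ = ^ρℝ(i)
    rintro ζ ⟨m, hm⟩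
    obtain ⟨h, rfl⟩ := rf_exists_rep ζ
    refine ⟨↑(fun i => (h i).re), ↑(fun i => (h i).im), ⟨m, ?_⟩, ⟨m, ?_⟩, ?_⟩
    · refine le_trans ?_ hm
      rw [Germ.abs_def, map_coe, map_coe]
      exact Germ.coe_le.mpr (Eventually.of_forall fun i => Complex.abs_re_le_norm (h i))
    · refine le_trans ?_ hm
      rw [Germ.abs_def, map_coe, map_coe]
      exact Germ.coe_le.mpr (Eventually.of_forall fun i => Complex.abs_im_le_norm (h i))
    · have hI : ((Complex.I : ℂ) : Filter.Germ (U : Filter I) ℂ) = ↑(fun _ : I => Complex.I) := rfl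
      have hzero : (↑h : Filter.Germ (U : Filter I) ℂ) -
          (Filter.Germ.map (fun t : ℝ => (t : ℂ)) ↑(fun i => (h i).re) +
            ((Complex.I : ℂ) : Filter.Germ (U : Filter I) ℂ) *
              Filter.Germ.map (fun t : ℝ => (t : ℂ)) ↑(fun i => (h i).im)) = 0 := by
        rw [map_coe, map_coe, hI, ← Germ.coe_mul, ← Germ.coe_add, ← Germ.coe_sub, ← Germ.coe_zero]
        refine Germ.coe_eq.mpr (Eventually.of_forall fun i => ?_)
        show h i - ((h i).re + Complex.I * (h i).im) = 0
        rw [mul_comm, Complex.re_add_im, sub_self]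
      rw [hzero]
      exact hneg0C

end Main
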